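/- Let C be a fusion category graded by a finite group G with pointed neutral component C_e (all simple objects of C_e invertible), and let X be a simple object lying in a component C_g with g ≠ e. Then X ⊗ X* is isomorphic to the direct sum ⊕_{s ∈ G[X]} s over the group G[X] of invertible objects s with s ⊗ X ≅ X, and |G[X]| = (FPdim X)². -/
import Mathlib


open scoped Classical

/-- The combinatorial data of (the Grothendieck ring of) a fusion category: a finite set
`I` of simple objects with unit `one`, duality `dual`, fusion multiplicities
`N a b c = dim Hom(c, a ⊗ b)`, and the Frobenius–Perron dimension `fpdim`, the unique
ring homomorphism of the Grothendieck ring to `ℝ` positive on the simple objects. -/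
structure FusionData (I : Type) [Fintype I] [DecidableEq I] where
  one : I
  dual : I → I
  N : I → I → I → ℕ
  fpdim : I → ℝ
  fpdim_pos : ∀ a, 0 < fpdim a
  fpdim_one : fpdim one = 1
  fpdim_mul : ∀ a b, fpdim a * fpdim b = ∑ c, (N a b c : ℝ) * fpdim c
  assoc : ∀ a b c d, ∑ e, N a b e * N e c d = ∑ e, N b c e * N a e d
  N_one_left : ∀ a b, N one a b = if a = b then 1 else 0
  N_one_right : ∀ a b, N a one b = if a = b then 1 else 0
  N_dual : ∀ a b, N a b one = if b = dual a then 1 else 0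
  frobenius : ∀ a b c, N a b c = N (dual a) c b

namespace FusionData

variable {I : Type} [Fintype I] [DecidableEq I] (F : FusionData I)

lemma N_dd (a b c : I) : F.N (F.dual (F.dual a)) b c = F.N a b c := by
  have h1 := F.frobenius a b c
  have h2 := F.frobenius (F.dual a) c b
  rw [h1, h2]

lemma dual_dual (a : I) : F.dual (F.dual a) = a := by
  have h := F.N_dd a F.one a
  rw [F.N_one_right, F.N_one_right] at h
  by_contra hne
  simp [hne] at h

lemma cyc (a b c : I) : F.N a b (F.dual c) = F.N b c (F.dual a) := by
  have h := F.assoc a b c F.one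
  have e1 : ∀ e : I, F.N e c F.one = if e = F.dual c then 1 else 0 := by
    intro e
    rw [F.N_dual]
    by_cases he : e = F.dual c
    · simp [he, F.dual_dual]
    · have hc : c ≠ F.dual e := by
        intro hc; apply he; rw [hc, F.dual_dual]
      simp [he, hc]
  simp only [e1, F.N_dual, mul_ite, mul_one, mul_zero, Finset.sum_ite_eq',
    Finset.mem_univ, if_true] at h
  exact h

lemma fpdim_dual (a : I) : F.fpdim (F.dual a) = F.fpdim a := by
  have hT : (0:ℝ) < ∑ b, F.fpdim b ^ 2 :=
    Finset.sum_pos (fun b _ => pow_pos (F.fpdim_pos b) 2) ⟨F.one, Finset.mem_univ _⟩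
  have key : F.fpdim a * ∑ b, F.fpdim b ^ 2 = F.fpdim (F.dual a) * ∑ b, F.fpdim b ^ 2 := by
    calc F.fpdim a * ∑ b, F.fpdim b ^ 2
        = ∑ b, (∑ c, (F.N a b c : ℝ) * F.fpdim c) * F.fpdim b := by
          rw [Finset.mul_sum]
          refine Finset.sum_congr rfl fun b _ => ?_
          rw [pow_two, ← mul_assoc, F.fpdim_mul]
      _ = ∑ b, ∑ c, (F.N a b c : ℝ) * F.fpdim c * F.fpdim b := by
          simp [Finset.sum_mul]
      _ = ∑ c, ∑ b, (F.N a b c : ℝ) * F.fpdim b * F.fpdim c := by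
          rw [Finset.sum_comm]
          exact Finset.sum_congr rfl fun b _ => Finset.sum_congr rfl fun c _ => by ring
      _ = ∑ c, ∑ b, (F.N (F.dual a) c b : ℝ) * F.fpdim b * F.fpdim c := by
          refine Finset.sum_congr rfl fun c _ => Finset.sum_congr rfl fun b _ => ?_
          rw [F.frobenius a b c]
      _ = ∑ c, F.fpdim (F.dual a) * F.fpdim c * F.fpdim c := by
          refine Finset.sum_congr rfl fun c _ => ?_
          rw [← Finset.sum_mul, ← F.fpdim_mul]
      _ = F.fpdim (F.dual a) * ∑ b, F.fpdim b ^ 2 := by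
          rw [Finset.mul_sum]
          exact Finset.sum_congr rfl fun c _ => by ring
  exact (mul_right_cancel₀ (ne_of_gt hT) key).symm

lemma inv_le_one (s b c₀ : I) (hs : F.fpdim s = 1) : F.N s b c₀ ≤ 1 := by
  have hb := F.fpdim_pos b
  have hbound : ∀ c, (F.N s b c : ℝ) * F.fpdim b ≤ F.fpdim c := by
    intro c
    have h := F.fpdim_mul (F.dual s) c
    rw [F.fpdim_dual, hs, one_mul] at h
    rw [h, F.frobenius s b c]
    refine Finset.single_le_sum (f := fun d => (F.N (F.dual s) c d : ℝ) * F.fpdim d)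
      (fun d _ => mul_nonneg (Nat.cast_nonneg _) (F.fpdim_pos d).le) (Finset.mem_univ b)
  have hmain : F.fpdim b * ∑ c, ((F.N s b c : ℝ)) ^ 2 ≤ F.fpdim b := by
    have h := F.fpdim_mul s b
    rw [hs, one_mul] at h
    calc F.fpdim b * ∑ c, ((F.N s b c : ℝ)) ^ 2
        = ∑ c, (F.N s b c : ℝ) * ((F.N s b c : ℝ) * F.fpdim b) := by
          rw [Finset.mul_sum]
          exact Finset.sum_congr rfl fun c _ => by ring
      _ ≤ ∑ c, (F.N s b c : ℝ) * F.fpdim c :=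
          Finset.sum_le_sum fun c _ =>
            mul_le_mul_of_nonneg_left (hbound c) (Nat.cast_nonneg _)
      _ = F.fpdim b := h.symm
  have hsum : ∑ c, ((F.N s b c : ℝ)) ^ 2 ≤ 1 := by nlinarith
  have h1 : ((F.N s b c₀ : ℝ)) ^ 2 ≤ 1 :=
    le_trans (Finset.single_le_sum (f := fun c => ((F.N s b c : ℝ)) ^ 2)
      (fun c _ => sq_nonneg _) (Finset.mem_univ c₀)) hsum
  by_contra hgt
  push_neg at hgt
  have h2 : (2:ℝ) ≤ (F.N s b c₀ : ℝ) := by exact_mod_cast hgt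
  nlinarith

end FusionData

/-- Let `C` be a fusion category graded by a finite group `G` with pointed neutral
component (every simple of degree `e` is invertible, i.e. has `FPdim = 1`), and let `X`
be a simple object lying in a component `C_g` with `g ≠ e`.  Then
`X ⊗ X* ≅ ⊕_{s ∈ G[X]} s`, where `G[X]` is the group of invertible objects `s` with
`s ⊗ X ≅ X`, and `|G[X]| = (FPdim X)²`. -/
theorem stmt14 {I : Type} [Fintype I] [DecidableEq I] (F : FusionData I)
    {G : Type} [Group G] (deg : I → G)
    (hdeg : ∀ a b c, F.N a b c ≠ 0 → deg c = deg a * deg b)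
    (hdeg_one : deg F.one = 1)
    (hdeg_dual : ∀ a, deg (F.dual a) = (deg a)⁻¹)
    (hpointed : ∀ a, deg a = 1 → F.fpdim a = 1)
    (X : I) (hX : deg X ≠ 1) :
    (∀ c, F.N X (F.dual X) c =
      if (F.fpdim c = 1 ∧ 1 ≤ F.N c X X) then 1 else 0) ∧
    ((Nat.card {s : I // F.fpdim s = 1 ∧ 1 ≤ F.N s X X} : ℝ) = (F.fpdim X) ^ 2) := by
  classical
  -- N X X* c = N c X X
  have key : ∀ c, F.N X (F.dual X) c = F.N c X X := by
    intro c
    have h2 : F.N (F.dual c) X X = F.N X (F.dual X) c := by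
      have h := F.cyc (F.dual c) X (F.dual X)
      rw [F.dual_dual, F.dual_dual] at h
      exact h
    have h3 : F.N (F.dual c) X X = F.N c X X := by
      have h := F.frobenius (F.dual c) X X
      rw [F.dual_dual] at h
      exact h
    rw [← h2, h3]
  have part1 : ∀ c, F.N X (F.dual X) c =
      if (F.fpdim c = 1 ∧ 1 ≤ F.N c X X) then 1 else 0 := by
    intro c
    rw [key c]
    by_cases h : 1 ≤ F.N c X X
    · have hne : F.N X (F.dual X) c ≠ 0 := by rw [key c]; omega
      have hdc : deg c = 1 := by
        have hd := hdeg X (F.dual X) c hne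
        rw [hdeg_dual, mul_inv_cancel] at hd
        exact hd
      have hfp : F.fpdim c = 1 := hpointed c hdc
      have hle := F.inv_le_one c X X hfp
      rw [if_pos ⟨hfp, h⟩]
      omega
    · rw [if_neg (fun hc => h hc.2)]
      omega
  refine ⟨part1, ?_⟩
  have hXX : F.fpdim X ^ 2 = ∑ c, (F.N X (F.dual X) c : ℝ) * F.fpdim c := by
    have h := F.fpdim_mul X (F.dual X)
    rw [F.fpdim_dual] at h
    rw [sq, h]
  have hsum : ∑ c, (F.N X (F.dual X) c : ℝ) * F.fpdim c
      = ∑ c, (if (F.fpdim c = 1 ∧ 1 ≤ F.N c X X) then (1:ℝ) else 0) := by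
    refine Finset.sum_congr rfl fun c _ => ?_
    rw [part1 c]
    split_ifs with hP
    · rw [hP.1]; norm_num
    · norm_num
  have hcard : Nat.card {s : I // F.fpdim s = 1 ∧ 1 ≤ F.N s X X}
      = (Finset.univ.filter (fun s => F.fpdim s = 1 ∧ 1 ≤ F.N s X X)).card := by
    rw [Nat.card_eq_fintype_card, Fintype.card_subtype]
  rw [hcard, hXX, hsum, Finset.sum_boole]
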